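/- Under the SOE hypothesis, if the tolerance satisfies ε ≤ min{(1/3)ω_{1−α}(T), α·ω_{2−α}(1)} and all time steps satisfy τ_k ≤ 1, then for every fixed n with 2 ≤ n ≤ N the fast L1 kernel is strictly decreasing and positive: A^{(n)}_{k−1} > A^{(n)}_k > 0 for 1 ≤ k ≤ n−1. -/

import Mathlib

open Real Finset MeasureTheory

/-- The kernel `ω_μ(s) = s^(μ-1)/Γ(μ)`. -/
noncomputable def omegaK (μ s : ℝ) : ℝ := s ^ (μ - 1) / Real.Gamma μ

/-- The L1 kernel: `L1K α t n k` is `a^{(n)}_{n-k}`. -/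
noncomputable def L1K (α : ℝ) (t : ℕ → ℝ) (n k : ℕ) : ℝ :=
  (omegaK (2 - α) (t n - t (k - 1)) - omegaK (2 - α) (t n - t k)) / (t k - t (k - 1))

/-- The fast L1 kernel: `fastK α t Nq θ w n k` is `A^{(n)}_{n-k}`: it coincides with the
L1 kernel for `k = n` and is the average of the sum-of-exponentials approximation on
`[t_{k-1}, t_k]` for `k < n`. -/
noncomputable def fastK (α : ℝ) (t : ℕ → ℝ) (Nq : ℕ) (θ w : ℕ → ℝ) (n k : ℕ) : ℝ :=
  if k = n then L1K α t n n
  else (∫ s in (t (k - 1))..(t k), ∑ ℓ ∈ Finset.range Nq, w ℓ * Real.exp (-(θ ℓ) * (t n - s))) /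
    (t k - t (k - 1))

lemma avg_lt_of_lt {f : ℝ → ℝ} {a b M : ℝ} (hab : a < b)
    (hfc : ContinuousOn f (Set.Icc a b))
    (hle : ∀ x ∈ Set.Icc a b, f x ≤ M) (hlt : ∃ c ∈ Set.Icc a b, f c < M) :
    (∫ s in a..b, f s) / (b - a) < M := by
  have h := intervalIntegral.integral_lt_integral_of_continuousOn_of_le_of_exists_lt hab hfc
    continuousOn_const (fun x hx => hle x ⟨hx.1.le, hx.2⟩) hlt
  rw [intervalIntegral.integral_const, smul_eq_mul] at h
  rw [div_lt_iff₀ (by linarith)]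
  linarith [h]

lemma lt_avg_of_lt {f : ℝ → ℝ} {a b M : ℝ} (hab : a < b)
    (hfc : ContinuousOn f (Set.Icc a b))
    (hle : ∀ x ∈ Set.Icc a b, M ≤ f x) (hlt : ∃ c ∈ Set.Icc a b, M < f c) :
    M < (∫ s in a..b, f s) / (b - a) := by
  have h := intervalIntegral.integral_lt_integral_of_continuousOn_of_le_of_exists_lt hab
    continuousOn_const hfc (fun x hx => hle x ⟨hx.1.le, hx.2⟩) hlt
  rw [intervalIntegral.integral_const, smul_eq_mul] at h
  rw [lt_div_iff₀ (by linarith)]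
  linarith [h]

lemma avg_pos' {f : ℝ → ℝ} {a b : ℝ} (hab : a < b) (hfc : Continuous f)
    (hpos : ∀ x, 0 < f x) : 0 < (∫ s in a..b, f s) / (b - a) :=
  div_pos (intervalIntegral.intervalIntegral_pos_of_pos
    (hfc.intervalIntegrable a b) hpos hab) (by linarith)

theorem fast_kernel_monotone_positive
    (T : ℝ) (hT : 0 < T) (N : ℕ) (hN : 1 ≤ N)
    (t : ℕ → ℝ) (ht0 : t 0 = 0) (htN : t N = T)
    (hmesh : ∀ k, 1 ≤ k → k ≤ N → t (k - 1) < t k)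
    (α : ℝ) (hα0 : 0 < α) (hα1 : α < 1)
    (Nq : ℕ) (hNq : 1 ≤ Nq) (θ w : ℕ → ℝ)
    (hθ : ∀ ℓ, ℓ < Nq → 0 < θ ℓ) (hw : ∀ ℓ, ℓ < Nq → 0 < w ℓ)
    (ε : ℝ) (hε : 0 < ε)
    (hSOE : ∀ s : ℝ, (∃ k, 1 ≤ k ∧ k ≤ N ∧ t k - t (k - 1) ≤ s) → s ≤ T →
      |omegaK (1 - α) s - ∑ ℓ ∈ Finset.range Nq, w ℓ * Real.exp (-(θ ℓ) * s)| ≤ ε)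
    (hεb : ε ≤ min ((1 / 3) * omegaK (1 - α) T) (α * omegaK (2 - α) 1))
    (hτ1 : ∀ k, 1 ≤ k → k ≤ N → t k - t (k - 1) ≤ 1) :
    ∀ n, 2 ≤ n → n ≤ N → ∀ k, 1 ≤ k → k ≤ n - 1 →
      fastK α t Nq θ w n (n - k + 1) > fastK α t Nq θ w n (n - k) ∧
      fastK α t Nq θ w n (n - k) > 0 := by
  intro n hn2 hnN k hk1 hk
  -- basic facts
  have hΓ2 : 0 < Real.Gamma (2 - α) := Real.Gamma_pos_of_pos (by linarith)
  have hΓ1 : 0 < Real.Gamma (1 - α) := Real.Gamma_pos_of_pos (by linarith)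
  have hΓeq : Real.Gamma (2 - α) = (1 - α) * Real.Gamma (1 - α) := by
    rw [show (2 : ℝ) - α = (1 - α) + 1 by ring, Real.Gamma_add_one (by linarith)]
  have hmono : ∀ i j : ℕ, i ≤ j → j ≤ N → t i ≤ t j := by
    intro i j hij hjN
    induction j with
    | zero => rw [Nat.le_zero.mp hij]
    | succ m ih =>
      rcases Nat.eq_or_lt_of_le hij with h | h
      · rw [h]
      · have h1 : t i ≤ t m := ih (Nat.lt_succ_iff.mp h) (by omega)
        have h2 : t (m + 1 - 1) < t (m + 1) := hmesh (m + 1) (by omega) hjN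
        simp only [Nat.add_sub_cancel] at h2
        linarith
  -- the SOE function
  set g : ℝ → ℝ := fun s => ∑ ℓ ∈ Finset.range Nq, w ℓ * Real.exp (-(θ ℓ) * (t n - s)) with hg
  have hgc : Continuous g := by
    apply continuous_finset_sum
    intro ℓ _
    fun_prop
  have hgpos : ∀ s, 0 < g s := fun s =>
    Finset.sum_pos (fun ℓ hℓ => mul_pos (hw ℓ (Finset.mem_range.mp hℓ)) (Real.exp_pos _))
      (Finset.nonempty_range_iff.mpr (by omega))
  have hgmono : ∀ s1 s2 : ℝ, s1 < s2 → g s1 < g s2 := by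
    intro s1 s2 h
    apply Finset.sum_lt_sum_of_nonempty (Finset.nonempty_range_iff.mpr (by omega))
    intro ℓ hℓ
    have hθℓ := hθ ℓ (Finset.mem_range.mp hℓ)
    have hwℓ := hw ℓ (Finset.mem_range.mp hℓ)
    have : Real.exp (-(θ ℓ) * (t n - s1)) < Real.exp (-(θ ℓ) * (t n - s2)) := by
      apply Real.exp_lt_exp.mpr
      nlinarith [mul_pos hθℓ (sub_pos.mpr h)]
    exact mul_lt_mul_of_pos_left this hwℓ
  have hgmono' : ∀ s1 s2 : ℝ, s1 ≤ s2 → g s1 ≤ g s2 := by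
    intro s1 s2 h
    rcases eq_or_lt_of_le h with h | h
    · rw [h]
    · exact (hgmono s1 s2 h).le
  set j := n - k with hjdef
  have hj1 : 1 ≤ j := by omega
  have hjn : j ≤ n - 1 := by omega
  have hjN : j ≤ N := by omega
  have hjne : j ≠ n := by omega
  have hjmesh : t (j - 1) < t j := hmesh j hj1 hjN
  -- fastK at index m ≤ n-1 is the average form
  have hform : ∀ m : ℕ, m ≠ n →
      fastK α t Nq θ w n m = (∫ s in (t (m - 1))..(t m), g s) / (t m - t (m - 1)) := by
    intro m hm
    simp only [fastK, if_neg hm, hg]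
  -- positivity
  have hpos : fastK α t Nq θ w n j > 0 := by
    rw [hform j hjne]
    exact avg_pos' hjmesh hgc hgpos
  refine ⟨?_, hpos⟩
  have hAjlt : fastK α t Nq θ w n j < g (t j) := by
    rw [hform j hjne]
    apply avg_lt_of_lt hjmesh hgc.continuousOn
    · exact fun x hx => hgmono' x (t j) hx.2
    · exact ⟨t (j - 1), Set.left_mem_Icc.mpr hjmesh.le, hgmono _ _ hjmesh⟩
  have hkey : n - k + 1 = j + 1 := rfl
  rw [hkey]
  by_cases hcase : j + 1 = n
  · -- j = n - 1 : compare with the L1 diagonal value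
    rw [hcase]
    set τ := t n - t (n - 1) with hτdef
    have hτpos : 0 < τ := by
      have := hmesh n (by omega) hnN
      simp only [hτdef]; linarith
    have hτle1 : τ ≤ 1 := hτ1 n (by omega) hnN
    have hzero : omegaK (2 - α) (t n - t n) = 0 := by
      simp [omegaK, sub_self, Real.zero_rpow (show (2 : ℝ) - α - 1 ≠ 0 by intro h; linarith)]
    have hAnn : fastK α t Nq θ w n n = τ ^ (-α) / Real.Gamma (2 - α) := by
      rw [fastK, if_pos rfl, L1K, hzero, sub_zero]
      have key : τ ^ ((2 : ℝ) - α - 1) = τ ^ (-α) * τ := by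
        rw [show (2 : ℝ) - α - 1 = (-α) + 1 by ring, Real.rpow_add hτpos, Real.rpow_one]
      simp only [omegaK, ← hτdef, key]
      field_simp
    -- bound the average by ω_{1-α}(τ) + ε
    have hjeq : j = n - 1 := by omega
    have hAlt : fastK α t Nq θ w n j < omegaK (1 - α) τ + ε := by
      rw [hform j hjne]
      apply avg_lt_of_lt hjmesh hgc.continuousOn
      · intro x hx
        have hxle : x ≤ t (n - 1) := by rw [← hjeq]; exact hx.2
        have hxge : t (j - 1) ≤ x := hx.1
        have hsge : τ ≤ t n - x := by simp only [hτdef]; linarith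
        have hsle : t n - x ≤ T := by
          have h1 : (0 : ℝ) ≤ t (j - 1) := by rw [← ht0]; exact hmono 0 (j - 1) (by omega) (by omega)
          have h2 : t n ≤ T := by rw [← htN]; exact hmono n N hnN le_rfl
          linarith
        have hs := hSOE (t n - x) ⟨n, by omega, hnN, by simp only [hτdef] at hsge; exact hsge⟩ hsle
        have hb : g x ≤ omegaK (1 - α) (t n - x) + ε := by
          have := abs_le.mp hs
          simp only [hg]
          linarith [this.1]
        have hw2 : omegaK (1 - α) (t n - x) ≤ omegaK (1 - α) τ := by
          simp only [omegaK]
          have : (t n - x) ^ ((1 : ℝ) - α - 1) ≤ τ ^ ((1 : ℝ) - α - 1) :=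
            Real.rpow_le_rpow_of_nonpos hτpos hsge (by linarith)
          rw [div_eq_mul_inv, div_eq_mul_inv]
          exact mul_le_mul_of_nonneg_right this (inv_nonneg.mpr hΓ1.le)
        linarith
      · refine ⟨t (j - 1), Set.left_mem_Icc.mpr hjmesh.le, ?_⟩
        set x := t (j - 1)
        have hxlt : x < t (n - 1) := by rw [← hjeq]; exact hjmesh
        have hsgt : τ < t n - x := by simp only [hτdef]; linarith
        have hsle : t n - x ≤ T := by
          have h1 : (0 : ℝ) ≤ x := by rw [← ht0]; exact hmono 0 (j - 1) (by omega) (by omega)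
          have h2 : t n ≤ T := by rw [← htN]; exact hmono n N hnN le_rfl
          linarith
        have hs := hSOE (t n - x) ⟨n, by omega, hnN, hsgt.le⟩ hsle
        have hb : g x ≤ omegaK (1 - α) (t n - x) + ε := by
          have := abs_le.mp hs
          simp only [hg]
          linarith [this.1]
        have hw2 : omegaK (1 - α) (t n - x) < omegaK (1 - α) τ := by
          simp only [omegaK]
          have : (t n - x) ^ ((1 : ℝ) - α - 1) < τ ^ ((1 : ℝ) - α - 1) :=
            Real.rpow_lt_rpow_of_neg hτpos hsgt (by linarith)
          rw [div_eq_mul_inv, div_eq_mul_inv]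
          exact mul_lt_mul_of_pos_right this (inv_pos.mpr hΓ1)
        linarith
    -- and ω_{1-α}(τ) + ε ≤ τ^{-α}/Γ(2-α)
    have hεle : ε ≤ α / Real.Gamma (2 - α) := by
      have := (le_min_iff.mp hεb).2
      simpa [omegaK, Real.one_rpow, div_eq_mul_inv] using this
    have hP1 : (1 : ℝ) ≤ τ ^ (-α) :=
      Real.one_le_rpow_of_pos_of_le_one_of_nonpos hτpos hτle1 (by linarith)
    have hωτ : omegaK (1 - α) τ = τ ^ (-α) / Real.Gamma (1 - α) := by
      simp only [omegaK]
      norm_num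
    have hfinal : omegaK (1 - α) τ + ε ≤ τ ^ (-α) / Real.Gamma (2 - α) := by
      rw [hωτ, le_div_iff₀ hΓ2]
      have hPG : τ ^ (-α) / Real.Gamma (1 - α) * Real.Gamma (1 - α) = τ ^ (-α) :=
        div_mul_cancel₀ _ hΓ1.ne'
      have hprod : τ ^ (-α) / Real.Gamma (1 - α) * Real.Gamma (2 - α) = τ ^ (-α) * (1 - α) := by
        rw [hΓeq, mul_comm (1 - α) (Real.Gamma (1 - α)), ← mul_assoc, hPG]
      have hεG : ε * Real.Gamma (2 - α) ≤ α := (le_div_iff₀ hΓ2).mp hεle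
      have hαP : α ≤ α * τ ^ (-α) := by
        nth_rewrite 1 [← mul_one α]
        exact mul_le_mul_of_nonneg_left hP1 hα0.le
      rw [add_mul, hprod]
      linarith [hεG, hαP]
    rw [hAnn]
    calc fastK α t Nq θ w n j < omegaK (1 - α) τ + ε := hAlt
      _ ≤ τ ^ (-α) / Real.Gamma (2 - α) := hfinal
  · -- interior case: compare two averages via g (t j)
    have hj1n : j + 1 ≤ n - 1 := by omega
    have hmesh' : t j < t (j + 1) := by
      have := hmesh (j + 1) (by omega) (by omega)
      simpa using this
    have hgt : g (t j) < fastK α t Nq θ w n (j + 1) := by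
      rw [hform (j + 1) hcase]
      simp only [Nat.add_sub_cancel]
      apply lt_avg_of_lt hmesh' hgc.continuousOn
      · exact fun x hx => hgmono' (t j) x hx.1
      · exact ⟨t (j + 1), Set.right_mem_Icc.mpr hmesh'.le, hgmono _ _ hmesh'⟩
    linarith
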